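/- Let γ ∈ [1/2, 1] and let 0 ≤ A ≤ B be real numbers. Then (B^{1−γ} + A^{1−γ})(B^γ − A^γ) ≥ B − A; equivalently, B^γ − A^γ ≥ (B − A)/(B^{1−γ} + A^{1−γ}). In particular, if a sequence (A_k) with A_0 = 0, A_{k+1} = A_k + a_{k+1}, a_{k+1} > 0 satisfies a_{k+1}/(2 A_{k+1}^{1−γ}) ≥ c for all k and some c > 0, then A_N ≥ (cN)^{1/γ}. -/
import Mathlib


/-- Elementary inequality used for the growth of the coefficients in the
universal method: for `γ ∈ [1/2, 1]` and `0 ≤ A ≤ B`,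
`(B^{1-γ} + A^{1-γ})(B^γ - A^γ) ≥ B - A`; consequently, if `A 0 = 0`,
`A (k+1) = A k + a (k+1)` with `a (k+1) > 0` and `a (k+1)/(2 A (k+1)^{1-γ}) ≥ c > 0`
for all `k`, then `A N ≥ (c N)^{1/γ}`. -/
theorem stmt_18 (γ : ℝ) (hγ : γ ∈ Set.Icc (1 / 2 : ℝ) 1) :
    (∀ A B : ℝ, 0 ≤ A → A ≤ B →
      B - A ≤ (B ^ (1 - γ) + A ^ (1 - γ)) * (B ^ γ - A ^ γ)) ∧
    (∀ (a A : ℕ → ℝ) (c : ℝ), 0 < c → A 0 = 0 →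
      (∀ k, 0 < a (k + 1)) → (∀ k, A (k + 1) = A k + a (k + 1)) →
      (∀ k, c ≤ a (k + 1) / (2 * (A (k + 1)) ^ (1 - γ))) →
      ∀ N : ℕ, (c * N) ^ (1 / γ) ≤ A N) := by
  obtain ⟨hγ1, hγ2⟩ := hγ
  have hγpos : 0 < γ := by linarith
  have h1γ : 0 ≤ 1 - γ := by linarith
  have h2γ : 0 ≤ 2 * γ - 1 := by linarith
  have key : ∀ A B : ℝ, 0 ≤ A → A ≤ B →
      B - A ≤ (B ^ (1 - γ) + A ^ (1 - γ)) * (B ^ γ - A ^ γ) := by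
    intro A B hA hAB
    have hB : 0 ≤ B := hA.trans hAB
    have eB : B ^ (1 - γ) * B ^ γ = B := by
      rw [← Real.rpow_add_of_nonneg hB h1γ hγpos.le]; norm_num
    have eA : A ^ (1 - γ) * A ^ γ = A := by
      rw [← Real.rpow_add_of_nonneg hA h1γ hγpos.le]; norm_num
    have eB2 : B ^ γ = B ^ (1 - γ) * B ^ (2 * γ - 1) := by
      rw [← Real.rpow_add_of_nonneg hB h1γ h2γ]; congr 1; ring
    have eA2 : A ^ γ = A ^ (1 - γ) * A ^ (2 * γ - 1) := by
      rw [← Real.rpow_add_of_nonneg hA h1γ h2γ]; congr 1; ring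
    have hmono : A ^ (2 * γ - 1) ≤ B ^ (2 * γ - 1) := Real.rpow_le_rpow hA hAB h2γ
    have hcross : B ^ (1 - γ) * A ^ γ ≤ A ^ (1 - γ) * B ^ γ := by
      rw [eA2, eB2]
      have h := mul_le_mul_of_nonneg_left hmono
        (mul_nonneg (Real.rpow_nonneg hA (1 - γ)) (Real.rpow_nonneg hB (1 - γ)))
      nlinarith [h]
    nlinarith [eB, eA, hcross]
  refine ⟨key, ?_⟩
  intro a A c hc hA0 ha hrec hineq N
  have hAnn : ∀ k, 0 ≤ A k := by
    intro k
    induction k with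
    | zero => rw [hA0]
    | succ n ih => rw [hrec n]; have := ha n; linarith
  have hAsucc : ∀ k, 0 < A (k + 1) := by
    intro k; rw [hrec k]; have := ha k; have := hAnn k; linarith
  have hstep : ∀ k, A k ^ γ + c ≤ A (k + 1) ^ γ := by
    intro k
    have hAB : A k ≤ A (k + 1) := by rw [hrec k]; have := ha k; linarith
    have h1 := key (A k) (A (k + 1)) (hAnn k) hAB
    have hBpos : 0 < (A (k + 1)) ^ (1 - γ) := Real.rpow_pos_of_pos (hAsucc k) _
    have hmono : A k ^ (1 - γ) ≤ A (k + 1) ^ (1 - γ) :=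
      Real.rpow_le_rpow (hAnn k) hAB h1γ
    have hγle : A k ^ γ ≤ A (k + 1) ^ γ := Real.rpow_le_rpow (hAnn k) hAB hγpos.le
    have h3 : c * (2 * A (k + 1) ^ (1 - γ)) ≤ a (k + 1) :=
      (le_div_iff₀ (by positivity)).mp (hineq k)
    have h5 : a (k + 1) = A (k + 1) - A k := by rw [hrec k]; ring
    have h4 : (A (k + 1) ^ (1 - γ) + A k ^ (1 - γ)) * (A (k + 1) ^ γ - A k ^ γ) ≤
        2 * A (k + 1) ^ (1 - γ) * (A (k + 1) ^ γ - A k ^ γ) := by nlinarith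
    have h6 : (2 * A (k + 1) ^ (1 - γ)) * c ≤
        (2 * A (k + 1) ^ (1 - γ)) * (A (k + 1) ^ γ - A k ^ γ) := by nlinarith
    have h7 : c ≤ A (k + 1) ^ γ - A k ^ γ :=
      le_of_mul_le_mul_left h6 (by positivity)
    linarith
  have hpow : ∀ N : ℕ, c * N ≤ A N ^ γ := by
    intro N
    induction N with
    | zero => simp [hA0, Real.zero_rpow hγpos.ne']
    | succ n ih =>
      have := hstep n
      push_cast
      linarith
  have h0 : (0 : ℝ) ≤ c * N := by positivity
  have h8 := Real.rpow_le_rpow h0 (hpow N) (by positivity : (0 : ℝ) ≤ 1 / γ)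
  have h9 : (A N ^ γ) ^ (1 / γ) = A N := by
    rw [← Real.rpow_mul (hAnn N), mul_one_div, div_self hγpos.ne', Real.rpow_one]
  linarith [h8, h9.le, h9.ge]
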